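/- Let V be a noncentral chi-square random variable with N degrees of freedom and noncentrality parameter a ≥ 0, and let p be a positive integer with N > 2p. Then E[V^{-p}] ≤ 1/((N-2)(N-4)⋯(N-2p)). -/

import Mathlib

open MeasureTheory ProbabilityTheory Real

open Set Filter in
private lemma contOn_aux (q : ℕ) (r : ℝ) (S : Set ℝ) (hS : ∀ x ∈ S, 0 ≤ x) :
    ContinuousOn (fun s : ℝ => s ^ q * (1 + 2*s) ^ (-r)) S := by
  apply (continuousOn_pow q).mul
  apply ContinuousOn.rpow_const
  · fun_prop
  · intro y hy; left; nlinarith [hS y hy]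

open Set Filter in
private lemma integrableJ (q : ℕ) (r : ℝ) (hr : (q:ℝ) + 1 < r) :
    IntegrableOn (fun s : ℝ => s ^ q * (1 + 2*s) ^ (-r)) (Ioi 0) := by
  have h1 : IntegrableOn (fun s : ℝ => s ^ q * (1 + 2*s) ^ (-r)) (Ioc 0 1) :=
    (ContinuousOn.integrableOn_compact isCompact_Icc
      (contOn_aux q r _ (fun x hx => hx.1))).mono_set Ioc_subset_Icc_self
  have h2 : IntegrableOn (fun s : ℝ => s ^ q * (1 + 2*s) ^ (-r)) (Ioi 1) := by
    have hint : IntegrableOn (fun s : ℝ => s ^ ((q:ℝ) - r)) (Ioi 1) :=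
      integrableOn_Ioi_rpow_of_lt (by linarith) one_pos
    apply Integrable.mono hint ((contOn_aux q r (Ioi 1) (fun x hx => by
      simp only [mem_Ioi] at hx; linarith)).aestronglyMeasurable measurableSet_Ioi)
    filter_upwards [ae_restrict_mem measurableSet_Ioi] with s hs
    simp only [mem_Ioi] at hs
    have hs0 : (0:ℝ) < s := by linarith
    rw [norm_of_nonneg (by positivity), norm_of_nonneg (by positivity)]
    have h3 : (1 + 2*s) ^ (-r) ≤ s ^ (-r) := by
      apply rpow_le_rpow_of_nonpos hs0 (by linarith) (by linarith)
    calc s ^ q * (1 + 2*s) ^ (-r) ≤ s ^ q * s ^ (-r) := by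
          apply mul_le_mul_of_nonneg_left h3 (by positivity)
      _ = s ^ ((q:ℝ) - r) := by
          rw [← rpow_natCast s q, ← rpow_add hs0]; ring_nf
  have : Ioi (0:ℝ) = Ioc 0 1 ∪ Ioi 1 := (Ioc_union_Ioi_eq_Ioi zero_le_one).symm
  rw [this]
  exact h1.union h2

open Set Filter in
private lemma hasDeriv_aux (c : ℝ) (s : ℝ) (hs : 0 < 1 + 2*s) :
    HasDerivAt (fun x : ℝ => (1 + 2*x) ^ c) (c * (1 + 2*s) ^ (c-1) * 2) s := by
  have h1 : HasDerivAt (fun x : ℝ => 1 + 2*x) 2 s := by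
    simpa using ((hasDerivAt_id s).const_mul 2).const_add 1
  exact (Real.hasDerivAt_rpow_const (Or.inl hs.ne')).comp s h1

open Set Filter in
private lemma tendsto_aux (q : ℕ) (c : ℝ) (hc : (q:ℝ) + c < 0) :
    Tendsto (fun s : ℝ => s ^ q * (1 + 2*s) ^ c) atTop (nhds 0) := by
  have h1 : Tendsto (fun s : ℝ => s ^ ((q:ℝ) + c)) atTop (nhds 0) :=
    by simpa using tendsto_rpow_neg_atTop (y := -((q:ℝ)+c)) (by linarith)
  have h2 : ∀ᶠ s : ℝ in atTop, ‖s ^ q * (1 + 2*s) ^ c‖ ≤ s ^ ((q:ℝ) + c) := by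
    filter_upwards [eventually_ge_atTop (1:ℝ)] with s hs
    have hs0 : (0:ℝ) < s := by linarith
    rw [norm_of_nonneg (by positivity)]
    have h3 : (1 + 2*s) ^ c ≤ s ^ c := by
      rcases le_or_gt c 0 with h | h
      · exact rpow_le_rpow_of_nonpos hs0 (by linarith) h
      · nlinarith [rpow_le_rpow hs0.le (show s ≤ 1 + 2*s by linarith) h.le]
    calc s ^ q * (1 + 2*s) ^ c ≤ s ^ q * s ^ c :=
          mul_le_mul_of_nonneg_left h3 (by positivity)
      _ = s ^ ((q:ℝ) + c) := by rw [← rpow_natCast s q, ← rpow_add hs0]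
  exact squeeze_zero_norm' h2 h1

open Set Filter in
private lemma baseJ (r : ℝ) (hr : 1 < r) :
    ∫ s in Ioi (0:ℝ), (1 + 2*s) ^ (-r) = 1 / (2*(r-1)) := by
  have hc : r - 1 ≠ 0 := by linarith
  have key := integral_Ioi_of_hasDerivAt_of_tendsto (a := (0:ℝ))
    (f := fun s => -(1 + 2*s) ^ (1-r) / (2*(r-1)))
    (f' := fun s => (1 + 2*s) ^ (-r)) (m := 0)
    ?_ ?_ ?_ ?_
  · rw [key]; norm_num; field_simp
  · apply ContinuousWithinAt.div_const
    apply ContinuousWithinAt.neg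
    apply ContinuousAt.continuousWithinAt
    apply ContinuousAt.rpow_const (by fun_prop) (Or.inl (by norm_num))
  · intro x hx
    simp only [mem_Ioi] at hx
    have h := ((hasDeriv_aux (1-r) x (by linarith)).neg).div_const (2*(r-1))
    refine h.congr_deriv (Eq.symm ?_)
    have h2 : (1:ℝ) - r - 1 = -r := by ring
    rw [h2]
    field_simp
    ring
  · simpa using integrableJ 0 r (by push_cast; linarith)
  · have := (tendsto_aux 0 (1-r) (by push_cast; linarith)).neg.div_const (2*(r-1))
    simpa using this

open Set Filter in
private lemma stepJ (q : ℕ) (r : ℝ) (hr : (q:ℝ) + 2 < r) :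
    ∫ s in Ioi (0:ℝ), s ^ (q+1) * (1 + 2*s) ^ (-r)
      = ((q:ℝ)+1)/(2*(r-1)) * ∫ s in Ioi (0:ℝ), s ^ q * (1 + 2*s) ^ (-(r-1)) := by
  have hc : r - 1 ≠ 0 := by linarith
  have hint1 : IntegrableOn (fun s : ℝ => s ^ q * (1 + 2*s) ^ (-(r-1))) (Ioi 0) :=
    integrableJ q (r-1) (by linarith)
  have hint2 : IntegrableOn (fun s : ℝ => s ^ (q+1) * (1 + 2*s) ^ (-r)) (Ioi 0) :=
    integrableJ (q+1) r (by push_cast; linarith)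
  have key := integral_Ioi_of_hasDerivAt_of_tendsto (a := (0:ℝ))
    (f := fun s => s ^ (q+1) * (1 + 2*s) ^ (1-r) / (2*(r-1)))
    (f' := fun s => ((q:ℝ)+1)/(2*(r-1)) * (s ^ q * (1 + 2*s) ^ (-(r-1)))
      - s ^ (q+1) * (1 + 2*s) ^ (-r)) (m := 0)
    ?_ ?_ ?_ ?_
  · have h0 : (0:ℝ) ^ (q+1) * (1 + 2*(0:ℝ)) ^ (1-r) / (2*(r-1)) = 0 := by
      simp [zero_pow]
    rw [h0, sub_zero] at key
    rw [integral_sub (hint1.const_mul _) hint2, integral_const_mul] at key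
    linarith [key]
  · apply ContinuousWithinAt.div_const
    apply ContinuousAt.continuousWithinAt
    exact (continuous_pow (q+1)).continuousAt.mul
      (ContinuousAt.rpow_const (by fun_prop) (Or.inl (by norm_num)))
  · intro x hx
    simp only [mem_Ioi] at hx
    have hB : (1 + 2*x) ^ (-(r-1)) = (1 + 2*x) * (1 + 2*x) ^ (-r) := by
      rw [show -(r-1) = 1 + -r by ring]
      rw [Real.rpow_one_add' (by linarith) (by intro h; apply hc; linarith)]
    have h := ((hasDerivAt_pow (q+1) x).mul (hasDeriv_aux (1-r) x (by linarith))).div_const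
      (2*(r-1))
    rw [show (1:ℝ) - r - 1 = -r by ring] at h
    simp only [Nat.add_sub_cancel] at h
    refine h.congr_deriv (Eq.symm ?_)
    show ((q:ℝ) + 1) / (2 * (r - 1)) * (x ^ q * (1 + 2 * x) ^ (-(r-1)))
      - x ^ (q + 1) * (1 + 2 * x) ^ (-r) = _
    rw [hB, show (1:ℝ)-r = -(r-1) by ring, hB]
    push_cast
    field_simp
    ring
  · exact (hint1.const_mul _).sub hint2
  · have := (tendsto_aux (q+1) (1-r) (by push_cast; linarith)).div_const (2*(r-1))
    simpa using this

open Set Filter in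
private lemma fullJ : ∀ (q : ℕ) (r : ℝ), (q:ℝ) + 1 < r →
    ∫ s in Ioi (0:ℝ), s ^ q * (1 + 2*s) ^ (-r)
      = (q.factorial : ℝ) / ∏ j ∈ Finset.range (q+1), (2*(r - j - 1)) := by
  intro q
  induction q with
  | zero =>
    intro r hr
    push_cast at hr
    simp only [pow_zero, one_mul]
    rw [baseJ r (by linarith)]
    simp [Finset.prod_range_one]
  | succ q ih =>
    intro r hr
    push_cast at hr
    rw [stepJ q r (by linarith), ih (r-1) (by linarith)]
    have hpos : ∀ j ∈ Finset.range (q+1), (0:ℝ) < 2*((r-1) - j - 1) := by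
      intro j hj
      simp only [Finset.mem_range] at hj
      have : (j:ℝ) ≤ q := by exact_mod_cast Nat.lt_succ_iff.mp hj
      nlinarith
    have ha : (0:ℝ) < ∏ j ∈ Finset.range (q+1), (2*((r-1) - j - 1)) :=
      Finset.prod_pos hpos
    have hsplit : ∏ j ∈ Finset.range (q+2), (2*(r - j - 1))
        = (∏ j ∈ Finset.range (q+1), (2*((r-1) - j - 1))) * (2*(r-1)) := by
      rw [Finset.prod_range_succ' (fun j => 2*(r - j - 1))]
      congr 1
      · apply Finset.prod_congr rfl
        intro j _
        push_cast
        ring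
      · norm_num
    rw [hsplit, Nat.factorial_succ]
    push_cast
    field_simp

open Set Filter in
private lemma lemL (q : ℕ) (v : ℝ) (hv : 0 < v) :
    ∫ s in Ioi (0:ℝ), s ^ q * exp (-(s*v)) = (q.factorial : ℝ) / v^(q+1) := by
  have hg : ∫ x in Ioi (0:ℝ), x ^ q * exp (-x) = (q.factorial : ℝ) := by
    have h1 := Real.Gamma_eq_integral (s := (q:ℝ)+1) (by positivity)
    rw [Real.Gamma_nat_eq_factorial] at h1
    rw [h1]
    simp only [add_sub_cancel_right]
    apply setIntegral_congr_fun measurableSet_Ioi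
    intro x hx
    simp only []
    rw [Real.rpow_natCast, mul_comm]
  have h2 := integral_comp_mul_left_Ioi (fun x => x ^ q * exp (-x)) 0 hv
  simp only [mul_zero, smul_eq_mul] at h2
  rw [hg] at h2
  have h3 : ∀ s : ℝ, (v*s) ^ q * exp (-(v*s)) = v^q * (s^q * exp (-(s*v))) := by
    intro s; rw [mul_pow, mul_comm v s]; ring
  simp only [h3] at h2
  rw [integral_const_mul] at h2
  have hvq : (v:ℝ)^q ≠ 0 := by positivity
  field_simp at h2 ⊢
  rw [pow_succ]
  have e : ∫ s in Ioi (0:ℝ), s ^ q * exp (-(v*s)) = ∫ s in Ioi (0:ℝ), s ^ q * exp (-(s*v)) := by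
    congr 1; funext s; rw [mul_comm v s]
  rw [e]; linear_combination h2

open Set Filter in
private lemma lemLint (q : ℕ) (v : ℝ) (hv : 0 < v) :
    IntegrableOn (fun s : ℝ => s ^ q * exp (-(s*v))) (Ioi 0) := by
  have h := integrableOn_rpow_mul_exp_neg_mul_rpow (s := (q:ℝ)) (p := 1) (b := v)
    (lt_of_lt_of_le neg_one_lt_zero (Nat.cast_nonneg q)) zero_lt_one hv
  apply h.congr_fun ?_ measurableSet_Ioi
  intro x hx
  simp only [mem_Ioi] at hx
  simp only []
  rw [Real.rpow_one, Real.rpow_natCast]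
  rw [show -v * x = -(x*v) by ring]

open Set Filter in
open scoped ENNReal NNReal in
private lemma gaussBound (μ0 : ℝ) (s : ℝ) (hs : 0 ≤ s) :
    ∫ x, exp (-(s * x^2)) ∂(gaussianReal μ0 1) ≤ (Real.sqrt (1+2*s))⁻¹ := by
  set b : ℝ := s + 1/2 with hb
  have hbpos : 0 < b := by positivity
  have hden : (2*s+1) ≠ 0 := by positivity
  set c : ℝ := μ0/(2*s+1) with hc
  set K : ℝ := -(s*μ0^2/(2*s+1)) with hK
  rw [gaussianReal_of_var_ne_zero _ one_ne_zero]
  have hmeasf : Measurable fun x : ℝ => (gaussianPDFReal μ0 1 x).toNNReal :=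
    (measurable_gaussianPDFReal μ0 1).real_toNNReal
  have hpdf : gaussianPDF μ0 1 = fun x => ((gaussianPDFReal μ0 1 x).toNNReal : ℝ≥0∞) := by
    funext x; rfl
  rw [hpdf, integral_withDensity_eq_integral_smul hmeasf]
  have hpt : ∀ x : ℝ, (gaussianPDFReal μ0 1 x).toNNReal • exp (-(s * x^2))
      = (Real.sqrt (2*π))⁻¹ * Real.exp K * Real.exp (-(b*(x - c)^2)) := by
    intro x
    rw [NNReal.smul_def, smul_eq_mul, Real.coe_toNNReal _ (gaussianPDFReal_nonneg _ _ _)]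
    rw [gaussianPDFReal]
    push_cast
    rw [mul_one, mul_assoc, ← Real.exp_add, mul_assoc, ← Real.exp_add]
    congr 1
    rw [hK, hc, hb]
    congr 1
    field_simp
    ring
  simp_rw [hpt]
  rw [integral_const_mul]
  have htrans : ∫ x : ℝ, Real.exp (-(b*(x - c)^2)) = ∫ x : ℝ, Real.exp (-(b*x^2)) := by
    exact integral_sub_right_eq_self (fun x => Real.exp (-(b*x^2))) c
  rw [htrans]
  have hgauss : ∫ x : ℝ, Real.exp (-(b*x^2)) = Real.sqrt (π/b) := by
    simpa [neg_mul] using integral_gaussian b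
  rw [hgauss]
  have hval : (Real.sqrt (2*π))⁻¹ * Real.sqrt (π/b) = (Real.sqrt (1+2*s))⁻¹ := by
    have h2 : Real.sqrt π ≠ 0 := by positivity
    have h3 : Real.sqrt b ≠ 0 := by positivity
    have h4 : Real.sqrt 2 ≠ 0 := by positivity
    rw [show (1:ℝ)+2*s = 2*b by rw [hb]; ring]
    rw [Real.sqrt_div pi_pos.le, Real.sqrt_mul (by norm_num : (0:ℝ) ≤ 2) π,
      Real.sqrt_mul (by norm_num : (0:ℝ) ≤ 2) b]
    field_simp
  calc (Real.sqrt (2*π))⁻¹ * Real.exp K * Real.sqrt (π/b)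
      = (Real.sqrt (2*π))⁻¹ * Real.sqrt (π/b) * Real.exp K := by ring
    _ = (Real.sqrt (1+2*s))⁻¹ * Real.exp K := by rw [hval]
    _ ≤ (Real.sqrt (1+2*s))⁻¹ * 1 := by
        apply mul_le_mul_of_nonneg_left _ (by positivity)
        rw [Real.exp_le_one_iff, hK, neg_nonpos]
        positivity
    _ = (Real.sqrt (1+2*s))⁻¹ := mul_one _

open Set Filter in
open scoped ENNReal NNReal in
/-- Let `V` be a noncentral chi-square random variable with `N` degrees of
freedom and noncentrality parameter `a ≥ 0` (realized as `V = ‖Z‖²` for a Gaussian vector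
`Z` in `ℝᴺ` with identity covariance and mean `m` of squared norm `a`), and let `p` be a
positive integer with `N > 2p`.  Then `E[V⁻ᵖ] ≤ 1/((N-2)(N-4)⋯(N-2p))`. -/
theorem stmt_3
    {Ω : Type*} [MeasureSpace Ω] [IsProbabilityMeasure (ℙ : Measure Ω)]
    (N p : ℕ) (hp : 0 < p) (hN : 2 * p < N)
    (a : ℝ) (ha : 0 ≤ a)
    (m : Fin N → ℝ) (hm : ∑ i, (m i) ^ 2 = a)
    (Z : Ω → Fin N → ℝ)
    (hmeas : ∀ i, Measurable fun ω => Z ω i)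
    (hindep : iIndepFun (fun i ω => Z ω i) ℙ)
    (hlaw : ∀ i, Measure.map (fun ω => Z ω i) ℙ = gaussianReal (m i) 1)
    (V : Ω → ℝ) (hV : ∀ ω, V ω = ∑ i, (Z ω i) ^ 2) :
    ∫ ω, (V ω ^ p)⁻¹ ∂ℙ ≤ (∏ k ∈ Finset.Icc 1 p, ((N : ℝ) - 2 * k))⁻¹ := by
  classical
  have hN0 : 0 < N := by omega
  set q : ℕ := p - 1 with hqdef
  have hqp : q + 1 = p := Nat.succ_pred_eq_of_pos hp
  have hr : (q:ℝ) + 1 < (N:ℝ)/2 := by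
    have h1 : ((q:ℝ) + 1) = (p:ℝ) := by rw [← hqp]; push_cast; ring
    rw [h1]
    have : (2*p:ℝ) < N := by exact_mod_cast hN
    linarith
  -- measurability and nonnegativity of V
  have hVeq : V = fun ω => ∑ i, (Z ω i)^2 := funext hV
  have hVmeas : Measurable V := by
    rw [hVeq]; exact Finset.measurable_sum _ (fun i _ => (hmeas i).pow_const 2)
  have hVnonneg : ∀ ω, 0 ≤ V ω := fun ω => (hV ω) ▸ Finset.sum_nonneg (fun i _ => sq_nonneg _)
  -- a.e. positivity of V
  have i0 : Fin N := ⟨0, hN0⟩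
  have hVpos : ∀ᵐ ω ∂ℙ, 0 < V ω := by
    have hmap : ℙ {ω | Z ω i0 = 0} = 0 := by
      have he : {ω | Z ω i0 = 0} = (fun ω => Z ω i0) ⁻¹' {0} := rfl
      rw [he, ← Measure.map_apply (hmeas i0) (measurableSet_singleton 0), hlaw i0]
      exact gaussianReal_absolutelyContinuous _ one_ne_zero (measure_singleton 0)
    have hz : ∀ᵐ ω ∂ℙ, Z ω i0 ≠ 0 := by
      rw [ae_iff]
      convert hmap using 2
      simp [not_not]
    filter_upwards [hz] with ω hω
    rw [hV ω]
    have h1 : (Z ω i0)^2 ≤ ∑ i, (Z ω i)^2 :=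
      Finset.single_le_sum (f := fun i => (Z ω i)^2) (fun i _ => sq_nonneg _)
        (Finset.mem_univ i0)
    have h2 : 0 < (Z ω i0)^2 := by positivity
    linarith
  -- positivity of the product
  have hDpos : 0 < ∏ k ∈ Finset.Icc 1 p, ((N:ℝ) - 2*k) := by
    apply Finset.prod_pos
    intro k hk
    simp only [Finset.mem_Icc] at hk
    have h1 : (k:ℝ) ≤ p := by exact_mod_cast hk.2
    have h2 : (2*p:ℝ) < N := by exact_mod_cast hN
    linarith
  -- product identity
  have hprod : ∏ k ∈ Finset.Icc 1 p, ((N:ℝ) - 2*k)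
      = ∏ j ∈ Finset.range (q+1), (2*((N:ℝ)/2 - j - 1)) := by
    rw [hqp, ← Finset.Ico_add_one_right_eq_Icc, Finset.prod_Ico_eq_prod_range]
    rw [show p + 1 - 1 = p by omega]
    apply Finset.prod_congr rfl
    intro j _
    push_cast
    ring
  -- integrability of exp(-(s*V))
  have hExpInt : ∀ s : ℝ, 0 ≤ s → Integrable (fun ω => exp (-(s * V ω))) ℙ := by
    intro s hs
    apply Integrable.mono' (integrable_const (1:ℝ))
      (((hVmeas.const_mul s).neg.exp).aestronglyMeasurable)
    filter_upwards with ω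
    rw [norm_of_nonneg (exp_pos _).le, Real.exp_le_one_iff, Pi.neg_apply, neg_nonpos]
    have := hVnonneg ω
    positivity
  -- the MGF bound
  have hMGF : ∀ s : ℝ, 0 ≤ s →
      ∫ ω, exp (-(s * V ω)) ∂ℙ ≤ ((Real.sqrt (1+2*s))⁻¹)^N := by
    intro s hs
    have hXindep : iIndepFun (fun i ω => (Z ω i)^2) ℙ :=
      hindep.comp (fun _ (x:ℝ) => x^2) (fun _ => measurable_id.pow_const 2)
    have hXmeas : ∀ i, Measurable (fun ω => (Z ω i)^2) := fun i => (hmeas i).pow_const 2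
    have hsum := hXindep.mgf_sum hXmeas Finset.univ (t := -s)
    have hL : mgf (∑ i, fun ω => (Z ω i)^2) ℙ (-s) = ∫ ω, exp (-(s * V ω)) ∂ℙ := by
      show ∫ ω, exp (-s * (∑ i, fun ω => (Z ω i)^2) ω) ∂ℙ = _
      congr 1
      funext ω
      rw [Finset.sum_apply, ← hV ω, neg_mul]
    have hR : ∀ i, mgf (fun ω => (Z ω i)^2) ℙ (-s) ≤ (Real.sqrt (1+2*s))⁻¹ := by
      intro i
      have heq : mgf (fun ω => (Z ω i)^2) ℙ (-s)
          = ∫ x, exp (-(s * x^2)) ∂(gaussianReal (m i) 1) := by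
        show ∫ ω, exp (-s * (Z ω i)^2) ∂ℙ = _
        rw [← hlaw i, integral_map (hmeas i).aemeasurable
          (Continuous.aestronglyMeasurable (by fun_prop))]
        congr 1
        funext ω
        rw [neg_mul]
      rw [heq]
      exact gaussBound (m i) s hs
    calc ∫ ω, exp (-(s * V ω)) ∂ℙ = ∏ i, mgf (fun ω => (Z ω i)^2) ℙ (-s) := by
          rw [← hL, hsum]
      _ ≤ ∏ _i : Fin N, (Real.sqrt (1+2*s))⁻¹ :=
          Finset.prod_le_prod (fun i _ => mgf_nonneg) (fun i _ => hR i)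
      _ = ((Real.sqrt (1+2*s))⁻¹)^N := by
          rw [Finset.prod_const, Finset.card_univ, Fintype.card_fin]
  -- sqrt-pow identity
  have hsq : ∀ s : ℝ, 0 < s → ((Real.sqrt (1+2*s))⁻¹)^N = (1+2*s) ^ (-((N:ℝ)/2)) := by
    intro s hs
    have h12 : (0:ℝ) ≤ 1+2*s := by linarith
    rw [Real.sqrt_eq_rpow, ← Real.rpow_neg h12, ← Real.rpow_natCast ((1+2*s) ^ (-(1/2:ℝ))) N,
      ← Real.rpow_mul h12]
    congr 1
    push_cast
    ring
  -- setup ENNReal computation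
  set c : ℝ≥0∞ := ENNReal.ofReal (q.factorial : ℝ) with hcdef
  have hc0 : c ≠ 0 := by
    simp only [hcdef, ne_eq, ENNReal.ofReal_eq_zero, not_le]
    exact_mod_cast q.factorial_pos
  have hctop : c ≠ ⊤ := ENNReal.ofReal_ne_top
  set F : Ω → ℝ≥0∞ := fun ω => ENNReal.ofReal ((V ω ^ p)⁻¹) with hFdef
  have hFmeas : Measurable F := ((hVmeas.pow_const p).inv).ennreal_ofReal
  have h0 : ∫ ω, (V ω ^ p)⁻¹ ∂ℙ = (∫⁻ ω, F ω ∂ℙ).toReal := by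
    rw [integral_eq_lintegral_of_nonneg_ae
      (Filter.Eventually.of_forall (fun ω => inv_nonneg.mpr (pow_nonneg (hVnonneg ω) p)))
      ((hVmeas.pow_const p).inv.aestronglyMeasurable)]
  rw [h0]
  apply ENNReal.toReal_le_of_le_ofReal (le_of_lt (inv_pos.mpr hDpos))
  -- key pointwise identity
  have hkey : ∀ᵐ ω ∂ℙ, F ω * c
      = ∫⁻ s in Ioi 0, ENNReal.ofReal (s^q * exp (-(s * V ω))) := by
    filter_upwards [hVpos] with ω hω
    have hL := lemL q (V ω) hω
    rw [hqp] at hL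
    have hnn : 0 ≤ᵐ[volume.restrict (Ioi 0)] fun s : ℝ => s^q * exp (-(s * V ω)) := by
      filter_upwards [ae_restrict_mem measurableSet_Ioi] with s hs
      have : (0:ℝ) < s := hs
      positivity
    have hmc : ∀ s : ℝ, exp (-(s * V ω)) = exp (-(s * V ω)) := fun _ => rfl
    rw [hFdef]
    have : (∫⁻ s in Ioi 0, ENNReal.ofReal (s^q * exp (-(s * V ω))))
        = ENNReal.ofReal (∫ s in Ioi 0, s^q * exp (-(s * V ω))) :=
      (ofReal_integral_eq_lintegral_ofReal (lemLint q (V ω) hω) hnn).symm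
    rw [this, hL, hcdef, ← ENNReal.ofReal_mul (by positivity)]
    congr 1
    rw [div_eq_mul_inv]
    ring
  -- measurability of the joint integrand
  have hjm : Measurable (Function.uncurry fun (ω : Ω) (s : ℝ) =>
      ENNReal.ofReal (s^q * exp (-(s * V ω)))) := by
    apply Measurable.ennreal_ofReal
    apply Measurable.mul
    · exact (measurable_snd.pow_const q)
    · exact ((measurable_snd.mul (hVmeas.comp measurable_fst)).neg).exp
  have hswap : ∫⁻ ω, (∫⁻ s in Ioi 0, ENNReal.ofReal (s^q * exp (-(s * V ω)))) ∂ℙ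
      = ∫⁻ s in Ioi 0, (∫⁻ ω, ENNReal.ofReal (s^q * exp (-(s * V ω))) ∂ℙ) :=
    lintegral_lintegral_swap hjm.aemeasurable
  -- inner bound
  have hinner : ∀ s ∈ Ioi (0:ℝ),
      ∫⁻ ω, ENNReal.ofReal (s^q * exp (-(s * V ω))) ∂ℙ
        ≤ ENNReal.ofReal (s^q * (1+2*s) ^ (-((N:ℝ)/2))) := by
    intro s hs
    have hs0 : (0:ℝ) < s := hs
    have hsq' : (0:ℝ) ≤ s^q := by positivity
    calc ∫⁻ ω, ENNReal.ofReal (s^q * exp (-(s * V ω))) ∂ℙ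
        = ENNReal.ofReal (s^q) * ∫⁻ ω, ENNReal.ofReal (exp (-(s * V ω))) ∂ℙ := by
          simp_rw [ENNReal.ofReal_mul hsq']
          rw [lintegral_const_mul _ (f := fun ω => ENNReal.ofReal (exp (-(s * V ω)))) (((hVmeas.const_mul s).neg.exp).ennreal_ofReal)]
      _ = ENNReal.ofReal (s^q) * ENNReal.ofReal (∫ ω, exp (-(s * V ω)) ∂ℙ) := by
          rw [← ofReal_integral_eq_lintegral_ofReal (hExpInt s hs0.le)
            (Filter.Eventually.of_forall fun ω => (exp_pos _).le)]
      _ ≤ ENNReal.ofReal (s^q) * ENNReal.ofReal (((Real.sqrt (1+2*s))⁻¹)^N) := by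
          gcongr
          exact hMGF s hs0.le
      _ = ENNReal.ofReal (s^q * (1+2*s) ^ (-((N:ℝ)/2))) := by
          rw [← ENNReal.ofReal_mul hsq', hsq s hs0]
  -- final integral value
  have hnn2 : 0 ≤ᵐ[volume.restrict (Ioi 0)]
      fun s : ℝ => s^q * (1+2*s) ^ (-((N:ℝ)/2)) := by
    filter_upwards [ae_restrict_mem measurableSet_Ioi] with s hs
    have : (0:ℝ) < s := hs
    positivity
  have hfin : ∫⁻ s in Ioi 0, ENNReal.ofReal (s^q * (1+2*s) ^ (-((N:ℝ)/2)))
      = ENNReal.ofReal ((q.factorial : ℝ) *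
          (∏ j ∈ Finset.range (q+1), (2*((N:ℝ)/2 - j - 1)))⁻¹) := by
    rw [← ofReal_integral_eq_lintegral_ofReal (integrableJ q _ hr) hnn2,
      fullJ q _ hr, div_eq_mul_inv]
  -- put everything together
  have hmain : (∫⁻ ω, F ω ∂ℙ) * c ≤ ENNReal.ofReal ((∏ k ∈ Finset.Icc 1 p, ((N:ℝ) - 2*k))⁻¹) * c := by
    calc (∫⁻ ω, F ω ∂ℙ) * c = ∫⁻ ω, F ω * c ∂ℙ := (lintegral_mul_const c hFmeas).symm
      _ = ∫⁻ ω, (∫⁻ s in Ioi 0, ENNReal.ofReal (s^q * exp (-(s * V ω)))) ∂ℙ :=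
          lintegral_congr_ae hkey
      _ = ∫⁻ s in Ioi 0, (∫⁻ ω, ENNReal.ofReal (s^q * exp (-(s * V ω))) ∂ℙ) := hswap
      _ ≤ ∫⁻ s in Ioi 0, ENNReal.ofReal (s^q * (1+2*s) ^ (-((N:ℝ)/2))) := by
          apply lintegral_mono_ae
          filter_upwards [ae_restrict_mem measurableSet_Ioi] with s hs
          exact hinner s hs
      _ = ENNReal.ofReal ((q.factorial : ℝ) *
            (∏ j ∈ Finset.range (q+1), (2*((N:ℝ)/2 - j - 1)))⁻¹) := hfin
      _ = ENNReal.ofReal ((∏ k ∈ Finset.Icc 1 p, ((N:ℝ) - 2*k))⁻¹) * c := by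
          rw [hcdef, ← ENNReal.ofReal_mul (by positivity)]
          congr 1
          rw [hprod]
          ring
  exact (ENNReal.mul_le_mul_iff_left hc0 hctop).mp hmain
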